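/- Let C₁, ..., C_N be nonempty convex subsets of a real normed space X, with C₁, ..., C_{N−1} open. Then ⋂_{i=1}^N C_i = ∅ if and only if there exist continuous affine functions φ₁, ..., φ_N : X → ℝ, not all constant, such that Σ_{i=1}^N φ_i = 0 and φ_i(x) ≥ 0 for all x ∈ C_i and each i = 1, ..., N. -/

import Mathlib

open Filter Set

set_option maxHeartbeats 1000000 in
theorem stmt14 {X : Type*} [NormedAddCommGroup X] [NormedSpace ℝ X]
    (N : ℕ) (hN : 0 < N) (C : Fin N → Set X)
    (hne : ∀ i, (C i).Nonempty) (hconv : ∀ i, Convex ℝ (C i))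
    (hopen : ∀ i : Fin N, (i : ℕ) + 1 < N → IsOpen (C i)) :
    (⋂ i, C i) = ∅ ↔
      ∃ (x' : Fin N → X →L[ℝ] ℝ) (t : Fin N → ℝ),
        (¬ ∀ i, x' i = 0) ∧
        (∀ x : X, ∑ i, (x' i x + t i) = 0) ∧
        (∀ i, ∀ x ∈ C i, 0 ≤ x' i x + t i) := by
  constructor
  · intro hempty
    obtain ⟨n, rfl⟩ : ∃ n, N = n + 1 := ⟨N - 1, (Nat.succ_pred_eq_of_pos hN).symm⟩
    set E := (Fin n → X) with hE
    set A : Set E := Set.univ.pi (fun i => C i.castSucc) with hA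
    set diagMap : X →L[ℝ] E := ContinuousLinearMap.pi (fun _ => ContinuousLinearMap.id ℝ X)
      with hdiag
    set B : Set E := diagMap '' C (Fin.last n) with hB
    have hAopen : IsOpen A := isOpen_set_pi Set.finite_univ
      (fun i _ => hopen i.castSucc (by simp))
    have hAconv : Convex ℝ A := convex_pi (fun i _ => hconv i.castSucc)
    have hBconv : Convex ℝ B := (hconv (Fin.last n)).linear_image (diagMap : X →ₗ[ℝ] E)
    have hdisj : Disjoint A B := by
      rw [Set.disjoint_left]
      rintro y hyA ⟨x, hx, rfl⟩
      have hmem : x ∈ ⋂ i, C i := by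
        refine Set.mem_iInter.2 (fun j => ?_)
        induction j using Fin.lastCases with
        | last => exact hx
        | cast i =>
          have := hyA i (Set.mem_univ i)
          exact this
      rw [hempty] at hmem
      exact hmem
    obtain ⟨f, u, hfu, hub⟩ := geometric_hahn_banach_open hAconv hAopen hBconv hdisj
    set g : Fin n → (X →L[ℝ] E) := fun i =>
      ContinuousLinearMap.pi (fun j => if j = i then ContinuousLinearMap.id ℝ X else 0) with hg
    set F : Fin n → (X →L[ℝ] ℝ) := fun i => f.comp (g i) with hF
    have hsum_g : ∀ y : E, ∑ i, g i (y i) = y := by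
      intro y; funext j
      rw [Finset.sum_apply]
      have : ∀ i : Fin n, (g i (y i)) j = if j = i then y i else 0 := by
        intro i
        have hr : (g i (y i)) j
            = (if j = i then ContinuousLinearMap.id ℝ X else (0 : X →L[ℝ] X)) (y i) := rfl
        rw [hr]
        split_ifs with h <;> simp
      simp only [this]
      simp
    have hfF : ∀ y : E, f y = ∑ i, F i (y i) := by
      intro y
      conv_lhs => rw [← hsum_g y]
      rw [map_sum]
      rfl
    set y₀ : ∀ i : Fin n, X := fun i => (hne i.castSucc).choose with hy₀def
    have hy₀ : ∀ i, y₀ i ∈ C i.castSucc := fun i => (hne i.castSucc).choose_spec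
    have hbdd : ∀ i : Fin n, BddAbove (F i '' C i.castSucc) := by
      intro i
      refine ⟨u - ∑ j ∈ Finset.univ.erase i, F j (y₀ j), ?_⟩
      rintro r ⟨x, hx, rfl⟩
      have hy : Function.update y₀ i x ∈ A := by
        intro j _
        rcases eq_or_ne j i with rfl | h
        · simpa using hx
        · simpa [Function.update_of_ne h] using hy₀ j
      have h1 := hfu _ hy
      rw [hfF] at h1
      rw [← Finset.add_sum_erase _ _ (Finset.mem_univ i)] at h1
      have he : ∑ j ∈ Finset.univ.erase i, F j (Function.update y₀ i x j)
          = ∑ j ∈ Finset.univ.erase i, F j (y₀ j) :=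
        Finset.sum_congr rfl (fun j hj => by
          rw [Function.update_of_ne (Finset.ne_of_mem_erase hj)])
      rw [Function.update_self, he] at h1
      linarith
    set s : Fin n → ℝ := fun i => sSup (F i '' C i.castSucc) with hs
    have hle : ∀ i : Fin n, ∀ x ∈ C i.castSucc, F i x ≤ s i := by
      intro i x hx
      exact le_csSup (hbdd i) ⟨x, hx, rfl⟩
    have hsu : ∑ i, s i ≤ u := by
      refine le_of_forall_pos_le_add (fun ε hε => ?_)
      have hn1 : (0:ℝ) < (n:ℝ) + 1 := by positivity
      have hδ : (0:ℝ) < ε / ((n:ℝ) + 1) := by positivity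
      have hex : ∀ i : Fin n, ∃ x ∈ C i.castSucc, s i - ε / ((n:ℝ)+1) < F i x := by
        intro i
        obtain ⟨r, hr, hr2⟩ := exists_lt_of_lt_csSup ((hne i.castSucc).image (F i))
          (by linarith : s i - ε / ((n:ℝ)+1) < s i)
        obtain ⟨x, hx, rfl⟩ := hr
        exact ⟨x, hx, hr2⟩
      choose y hy1 hy2 using hex
      have hyA : y ∈ A := fun i _ => hy1 i
      have h1 := hfu y hyA
      rw [hfF] at h1
      have h2 : ∑ i, (s i - ε / ((n:ℝ)+1)) ≤ ∑ i, F i (y i) :=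
        Finset.sum_le_sum (fun i _ => (hy2 i).le)
      have h3 : ∑ i : Fin n, (s i - ε / ((n:ℝ)+1))
          = ∑ i, s i - (n:ℝ) * (ε / ((n:ℝ)+1)) := by
        rw [Finset.sum_sub_distrib]
        simp [Finset.card_univ, mul_comm]
      have h4 : (n:ℝ) * (ε / ((n:ℝ)+1)) ≤ ε := by
        rw [mul_div_assoc', div_le_iff₀ hn1]
        nlinarith [Nat.cast_nonneg (α := ℝ) n]
      linarith
    have hfne : ∃ i : Fin n, F i ≠ 0 := by
      by_contra h
      push_neg at h
      obtain ⟨b₀, hb₀⟩ := hne (Fin.last n)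
      have hb := hub _ ⟨b₀, hb₀, rfl⟩
      have ha := hfu y₀ (fun i _ => hy₀ i)
      rw [hfF] at ha hb
      simp only [h, ContinuousLinearMap.zero_apply, Finset.sum_const_zero] at ha hb
      linarith
    refine ⟨Fin.lastCases (∑ i, F i) (fun i => -(F i)),
      Fin.lastCases (-(∑ i, s i)) s, ?_, ?_, ?_⟩
    · intro hall
      obtain ⟨i, hi⟩ := hfne
      have := hall i.castSucc
      simp only [Fin.lastCases_castSucc] at this
      exact hi (neg_eq_zero.mp this)
    · intro x
      rw [Fin.sum_univ_castSucc]
      simp only [Fin.lastCases_castSucc, Fin.lastCases_last,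
        ContinuousLinearMap.neg_apply, ContinuousLinearMap.sum_apply]
      rw [Finset.sum_add_distrib, Finset.sum_neg_distrib]
      ring
    · intro j
      induction j using Fin.lastCases with
      | last =>
        intro x hx
        simp only [Fin.lastCases_last]
        have hd : f (diagMap x) = ∑ i, F i x := by rw [hfF]; rfl
        have h1 := hub (diagMap x) ⟨x, hx, rfl⟩
        rw [hd] at h1
        rw [ContinuousLinearMap.sum_apply]
        linarith
      | cast i =>
        intro x hx
        simp only [Fin.lastCases_castSucc]
        have := hle i x hx
        simp only [ContinuousLinearMap.neg_apply]
        linarith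
  · rintro ⟨x', t, hnz, hsum, hpos⟩
    rw [Set.eq_empty_iff_forall_notMem]
    intro x hx
    rw [Set.mem_iInter] at hx
    have hzero : ∀ i, x' i x + t i = 0 := by
      have h0 := hsum x
      have := (Finset.sum_eq_zero_iff_of_nonneg
        (fun i _ => hpos i x (hx i))).mp h0
      exact fun i => this i (Finset.mem_univ i)
    have ht0 : ∑ i, t i = 0 := by
      have h2 := hsum 0
      simpa using h2
    have hlin : ∀ z : X, ∑ i, x' i z = 0 := by
      intro z
      have h1 := hsum z
      rw [Finset.sum_add_distrib, ht0] at h1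
      linarith
    have hkey : ∃ i : Fin N, x' i ≠ 0 ∧ (i : ℕ) + 1 < N := by
      by_contra h
      push_neg at h
      apply hnz
      intro i
      by_contra hi
      have hiN : (i : ℕ) + 1 = N := by
        have := h i hi
        omega
      have honly : ∀ j : Fin N, j ≠ i → x' j = 0 := by
        intro j hj
        by_contra hj'
        have hjN : (j : ℕ) + 1 = N := by
          have := h j hj'
          omega
        exact hj (Fin.ext (by omega))
      apply hi
      ext z
      have hss : ∑ j, x' j z = x' i z :=
        Finset.sum_eq_single_of_mem i (Finset.mem_univ i)
          (fun j _ hj => by rw [honly j hj]; simp)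
      have hz : x' i z = 0 := by rw [← hss]; exact hlin z
      simpa using hz
    obtain ⟨i, hi, hiN⟩ := hkey
    obtain ⟨v, hv⟩ : ∃ v, x' i v < 0 := by
      by_contra h
      push_neg at h
      apply hi
      ext v
      have h1 := h v
      have h2 := h (-v)
      rw [map_neg] at h2
      simp only [ContinuousLinearMap.zero_apply]
      linarith
    obtain ⟨δ, hδ, hball⟩ := Metric.isOpen_iff.mp (hopen i hiN) x (hx i)
    set ε := δ / (‖v‖ + 1) with hε
    have hεpos : 0 < ε := by positivity
    have hεn : ε * ‖v‖ < δ := by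
      rw [hε, div_mul_eq_mul_div, div_lt_iff₀ (by positivity)]
      nlinarith [norm_nonneg v]
    have hmem : x + ε • v ∈ C i := by
      apply hball
      rw [Metric.mem_ball, dist_eq_norm, add_sub_cancel_left, norm_smul,
        Real.norm_eq_abs, abs_of_pos hεpos]
      exact hεn
    have h1 := hpos i _ hmem
    rw [map_add, map_smul] at h1
    have h0 := hzero i
    have hneg : ε * x' i v < 0 := mul_neg_of_pos_of_neg hεpos hv
    rw [smul_eq_mul] at h1
    linarith
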